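/- Let a : Fin n → ℝ be positive, n ≥ 2, with ∑ aᵢ = 1, and let 1 ≤ k < n. Then ∑ over all (k+1)-element subsets S of {1,...,n} of ∑ over all k-element subsets T of S of (∏_{i∈S} aᵢ)/(∑_{i∈T} aᵢ) ≤ ((n−k)/k) · ∑ over all k-element subsets S of ∏_{i∈S} aᵢ. -/

import Mathlib

open Finset

lemma reindexA {n : ℕ} (m : ℕ) (F : Finset (Fin n) → Fin n → ℝ) :
    ∑ T ∈ Finset.univ.powersetCard (m+1), ∑ i ∈ T, F T i
    = ∑ U ∈ Finset.univ.powersetCard m, ∑ j ∈ Uᶜ, F (insert j U) j := by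
  rw [Finset.sum_sigma', Finset.sum_sigma']
  refine Finset.sum_nbij' (fun p => ⟨p.1.erase p.2, p.2⟩) (fun p => ⟨insert p.2 p.1, p.2⟩)
    ?_ ?_ ?_ ?_ ?_
  · rintro ⟨T, i⟩ hp
    simp only [Finset.mem_sigma, Finset.mem_powersetCard_univ] at hp ⊢
    obtain ⟨hT, hi⟩ := hp
    refine ⟨?_, ?_⟩
    · rw [Finset.card_erase_of_mem hi, hT]; omega
    · simp [Finset.mem_compl]
  · rintro ⟨U, j⟩ hp
    simp only [Finset.mem_sigma, Finset.mem_powersetCard_univ, Finset.mem_compl] at hp ⊢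
    obtain ⟨hU, hj⟩ := hp
    refine ⟨?_, Finset.mem_insert_self _ _⟩
    · rw [Finset.card_insert_of_notMem hj, hU]
  · rintro ⟨T, i⟩ hp
    simp only [Finset.mem_sigma, Finset.mem_powersetCard_univ] at hp
    simp [Finset.insert_erase hp.2]
  · rintro ⟨U, j⟩ hp
    simp only [Finset.mem_sigma, Finset.mem_powersetCard_univ, Finset.mem_compl] at hp
    simp [Finset.erase_insert hp.2]
  · rintro ⟨T, i⟩ hp
    simp only [Finset.mem_sigma, Finset.mem_powersetCard_univ] at hp
    simp [Finset.insert_erase hp.2]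

lemma reindexB {n k : ℕ} (G : Finset (Fin n) → Finset (Fin n) → ℝ) :
    ∑ S ∈ Finset.univ.powersetCard (k+1), ∑ T ∈ S.powersetCard k, G S T
    = ∑ T ∈ Finset.univ.powersetCard k, ∑ j ∈ Tᶜ, G (insert j T) T := by
  rw [Finset.sum_sigma', Finset.sum_sigma']
  symm
  refine Finset.sum_nbij (fun p => ⟨insert p.2 p.1, p.1⟩) ?_ ?_ ?_ ?_
  · rintro ⟨T, j⟩ hp
    simp only [Finset.mem_sigma, Finset.mem_powersetCard_univ, Finset.mem_compl] at hp
    obtain ⟨hT, hj⟩ := hp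
    rw [Finset.mem_sigma]
    constructor
    · rw [Finset.mem_powersetCard_univ, Finset.card_insert_of_notMem hj, hT]
    · rw [Finset.mem_powersetCard]
      exact ⟨Finset.subset_insert _ _, hT⟩
  · rintro ⟨T₁, j₁⟩ hp₁ ⟨T₂, j₂⟩ hp₂ heq
    simp only [Finset.coe_sigma, Set.mem_sigma_iff, Finset.mem_coe,
      Finset.mem_powersetCard_univ, Finset.mem_compl] at hp₁ hp₂
    obtain ⟨h1, h2⟩ := Sigma.mk.inj_iff.mp heq
    have hT : T₁ = T₂ := by
      have := h2
      simpa using this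
    subst hT
    have hj : j₁ = j₂ := by
      have : j₁ ∈ insert j₂ T₁ := h1 ▸ Finset.mem_insert_self j₁ T₁
      rcases Finset.mem_insert.mp this with h | h
      · exact h
      · exact absurd h hp₁.2
    subst hj
    rfl
  · rintro ⟨S, T⟩ hp
    simp only [Finset.coe_sigma, Set.mem_sigma_iff, Finset.mem_coe,
      Finset.mem_powersetCard] at hp
    obtain ⟨⟨_, hS⟩, hTS, hT⟩ := hp
    have hcard : (S \ T).card = 1 := by
      rw [Finset.card_sdiff_of_subset hTS, hS, hT]; omega
    obtain ⟨j, hj⟩ := Finset.card_eq_one.mp hcard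
    have hjT : j ∉ T := by
      have : j ∈ S \ T := hj ▸ Finset.mem_singleton_self j
      exact (Finset.mem_sdiff.mp this).2
    refine ⟨⟨T, j⟩, ?_, ?_⟩
    · simp only [Finset.coe_sigma, Set.mem_sigma_iff, Finset.mem_coe,
        Finset.mem_powersetCard_univ, Finset.mem_compl]
      exact ⟨hT, hjT⟩
    · show (⟨insert j T, T⟩ : Σ _ : Finset (Fin n), Finset (Fin n)) = ⟨S, T⟩
      have : insert j T = S := by
        rw [Finset.insert_eq, ← hj, Finset.sdiff_union_of_subset hTS]
      rw [this]
  · rintro ⟨T, j⟩ _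
    rfl

theorem stmt8 (n k : ℕ) (hn : 2 ≤ n) (hk : 1 ≤ k) (hkn : k < n)
    (a : Fin n → ℝ) (ha : ∀ i, 0 < a i) (hsum : ∑ i, a i = 1) :
    ∑ S ∈ Finset.univ.powersetCard (k+1), ∑ T ∈ S.powersetCard k,
        (∏ i ∈ S, a i) / (∑ i ∈ T, a i) ≤
      (((n:ℝ)-(k:ℝ))/(k:ℝ)) * ∑ S ∈ Finset.univ.powersetCard k, ∏ i ∈ S, a i := by
  classical
  have hk0 : (0:ℝ) < (k:ℝ) := by exact_mod_cast hk
  -- Step 1: reindex LHS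
  rw [reindexB (fun S T => (∏ i ∈ S, a i) / (∑ i ∈ T, a i))]
  -- AM-HM key bound
  have key : ∀ T ∈ Finset.univ.powersetCard k,
      (∏ i ∈ T, a i) / (∑ i ∈ T, a i)
        ≤ (1/(k:ℝ)^2) * ∑ i ∈ T, ∏ x ∈ T.erase i, a x := by
    intro T hT
    rw [Finset.mem_powersetCard_univ] at hT
    have hs : (0:ℝ) < ∑ i ∈ T, a i := by
      apply Finset.sum_pos (fun i _ => ha i)
      rw [← Finset.card_pos, hT]; omega
    have hprod : (0:ℝ) < ∏ i ∈ T, a i := Finset.prod_pos (fun i _ => ha i)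
    have hCS : ((k:ℝ))^2 ≤ (∑ i ∈ T, a i) * (∑ i ∈ T, (a i)⁻¹) := by
      have := Finset.sum_mul_sq_le_sq_mul_sq T (fun i => Real.sqrt (a i))
        (fun i => (Real.sqrt (a i))⁻¹)
      have h1 : ∀ i ∈ T, Real.sqrt (a i) * (Real.sqrt (a i))⁻¹ = 1 := by
        intro i _
        exact mul_inv_cancel₀ (ne_of_gt (Real.sqrt_pos.mpr (ha i)))
      have h2 : ∀ i ∈ T, (Real.sqrt (a i))^2 = a i := fun i _ => Real.sq_sqrt (ha i).le
      have h3 : ∀ i ∈ T, ((Real.sqrt (a i))⁻¹)^2 = (a i)⁻¹ := by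
        intro i _; rw [inv_pow, Real.sq_sqrt (ha i).le]
      rw [Finset.sum_congr rfl h1, Finset.sum_congr rfl h2, Finset.sum_congr rfl h3,
        Finset.sum_const, hT, nsmul_eq_mul, mul_one] at this
      exact this
    have heq : ∑ i ∈ T, ∏ x ∈ T.erase i, a x = (∏ i ∈ T, a i) * ∑ i ∈ T, (a i)⁻¹ := by
      rw [Finset.mul_sum]
      refine Finset.sum_congr rfl fun i hi => ?_
      rw [← Finset.mul_prod_erase T a hi, mul_comm (a i), mul_assoc,
        mul_inv_cancel₀ (ne_of_gt (ha i)), mul_one]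
    rw [heq, div_le_iff₀ hs]
    have h4 : (∏ i ∈ T, a i) * (k:ℝ)^2 ≤ (∏ i ∈ T, a i) * ((∑ i ∈ T, a i) * (∑ i ∈ T, (a i)⁻¹)) :=
      mul_le_mul_of_nonneg_left hCS hprod.le
    calc ∏ i ∈ T, a i = (1/(k:ℝ)^2) * ((∏ i ∈ T, a i) * (k:ℝ)^2) := by
          field_simp
      _ ≤ (1/(k:ℝ)^2) * ((∏ i ∈ T, a i) * ((∑ i ∈ T, a i) * (∑ i ∈ T, (a i)⁻¹))) := by
          apply mul_le_mul_of_nonneg_left h4; positivity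
      _ = 1 / (k:ℝ) ^ 2 * ((∏ i ∈ T, a i) * ∑ i ∈ T, (a i)⁻¹) * (∑ i ∈ T, a i) := by ring
  -- Main chain
  have step2 : ∑ T ∈ Finset.univ.powersetCard k, ∑ j ∈ Tᶜ,
      (∏ i ∈ insert j T, a i) / (∑ i ∈ T, a i)
      ≤ (1/(k:ℝ)^2) * ∑ T ∈ Finset.univ.powersetCard k, ∑ j ∈ Tᶜ,
        a j * ∑ i ∈ T, ∏ x ∈ T.erase i, a x := by
    rw [Finset.mul_sum]
    refine Finset.sum_le_sum fun T hT => ?_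
    rw [Finset.mul_sum]
    refine Finset.sum_le_sum fun j hj => ?_
    rw [Finset.mem_compl] at hj
    rw [Finset.prod_insert hj, mul_div_assoc]
    calc a j * ((∏ i ∈ T, a i) / (∑ i ∈ T, a i))
        ≤ a j * ((1/(k:ℝ)^2) * ∑ i ∈ T, ∏ x ∈ T.erase i, a x) :=
          mul_le_mul_of_nonneg_left (key T hT) (ha j).le
      _ = 1/(k:ℝ)^2 * (a j * ∑ i ∈ T, ∏ x ∈ T.erase i, a x) := by ring
  -- Combinatorial identity for the triple sum
  have hk1 : k = (k-1)+1 := (Nat.succ_pred_eq_of_pos hk).symm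
  have comb : ∑ T ∈ Finset.univ.powersetCard k, ∑ j ∈ Tᶜ,
      a j * ∑ i ∈ T, ∏ x ∈ T.erase i, a x
      = ((n:ℝ)-(k:ℝ)) * (k:ℝ) * ∑ S ∈ Finset.univ.powersetCard k, ∏ i ∈ S, a i := by
    have e1 : ∀ T : Finset (Fin n), ∑ j ∈ Tᶜ, a j * ∑ i ∈ T, ∏ x ∈ T.erase i, a x
        = ∑ i ∈ T, (∑ j ∈ Tᶜ, a j) * ∏ x ∈ T.erase i, a x := by
      intro T
      simp_rw [Finset.mul_sum]
      rw [Finset.sum_comm]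
      exact Finset.sum_congr rfl fun i _ => by rw [Finset.sum_mul]
    calc ∑ T ∈ Finset.univ.powersetCard k, ∑ j ∈ Tᶜ, a j * ∑ i ∈ T, ∏ x ∈ T.erase i, a x
        = ∑ T ∈ Finset.univ.powersetCard ((k-1)+1), ∑ i ∈ T,
            (∑ j ∈ Tᶜ, a j) * ∏ x ∈ T.erase i, a x := by
          rw [← hk1]; exact Finset.sum_congr rfl fun T _ => e1 T
      _ = ∑ U ∈ Finset.univ.powersetCard (k-1), ∑ i ∈ Uᶜ,
            (∑ j ∈ (insert i U)ᶜ, a j) * ∏ x ∈ (insert i U).erase i, a x := by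
          exact reindexA (k-1) (fun T i => (∑ j ∈ Tᶜ, a j) * ∏ x ∈ T.erase i, a x)
      _ = ∑ U ∈ Finset.univ.powersetCard (k-1),
            ((n:ℝ)-(k:ℝ)) * ((∑ j ∈ Uᶜ, a j) * ∏ x ∈ U, a x) := by
          refine Finset.sum_congr rfl fun U hU => ?_
          rw [Finset.mem_powersetCard_univ] at hU
          have hUc : ∀ i ∈ Uᶜ, (∑ j ∈ (insert i U)ᶜ, a j) * ∏ x ∈ (insert i U).erase i, a x
              = ((∑ j ∈ Uᶜ, a j) - a i) * ∏ x ∈ U, a x := by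
            intro i hi
            rw [Finset.compl_insert, Finset.erase_insert (Finset.mem_compl.mp hi),
              Finset.sum_erase_eq_sub hi]
          rw [Finset.sum_congr rfl hUc]
          have hcard : (Uᶜ : Finset (Fin n)).card = n - (k-1) := by
            rw [Finset.card_compl, hU, Fintype.card_fin]
          rw [← Finset.sum_mul, Finset.sum_sub_distrib, Finset.sum_const, hcard,
            nsmul_eq_mul]
          have : ((n - (k-1) : ℕ) : ℝ) = (n:ℝ) - (k:ℝ) + 1 := by
            have h1 : k - 1 ≤ n := by omega
            rw [Nat.cast_sub h1, Nat.cast_sub hk]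
            push_cast; ring
          rw [this]; ring
      _ = ((n:ℝ)-(k:ℝ)) * ∑ U ∈ Finset.univ.powersetCard (k-1), ∑ i ∈ Uᶜ,
            ∏ x ∈ insert i U, a x := by
          rw [Finset.mul_sum]
          refine Finset.sum_congr rfl fun U hU => ?_
          congr 1
          rw [Finset.sum_mul]
          refine Finset.sum_congr rfl fun i hi => ?_
          rw [Finset.prod_insert (Finset.mem_compl.mp hi)]
      _ = ((n:ℝ)-(k:ℝ)) * ∑ T ∈ Finset.univ.powersetCard ((k-1)+1), ∑ i ∈ T,
            ∏ x ∈ T, a x := by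
          rw [reindexA (k-1) (fun T _ => ∏ x ∈ T, a x)]
      _ = ((n:ℝ)-(k:ℝ)) * (k:ℝ) * ∑ S ∈ Finset.univ.powersetCard k, ∏ i ∈ S, a i := by
          rw [← hk1]
          have h5 : ∀ T ∈ Finset.univ.powersetCard k,
              ∑ _i ∈ T, ∏ x ∈ T, a x = (k:ℝ) * ∏ x ∈ T, a x := by
            intro T hT
            rw [Finset.mem_powersetCard_univ] at hT
            rw [Finset.sum_const, hT, nsmul_eq_mul]
          rw [Finset.sum_congr rfl h5, mul_assoc, Finset.mul_sum]
          simp_rw [Finset.mul_sum]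
  calc ∑ T ∈ Finset.univ.powersetCard k, ∑ j ∈ Tᶜ,
        (∏ i ∈ insert j T, a i) / (∑ i ∈ T, a i)
      ≤ (1/(k:ℝ)^2) * (((n:ℝ)-(k:ℝ)) * (k:ℝ) *
          ∑ S ∈ Finset.univ.powersetCard k, ∏ i ∈ S, a i) := by
        rw [← comb]; exact step2
    _ = (((n:ℝ)-(k:ℝ))/(k:ℝ)) * ∑ S ∈ Finset.univ.powersetCard k, ∏ i ∈ S, a i := by
        field_simp
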